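/- Let k ≥ 4, let X = {x₁,…,x_m}, Y = {y₄,…,y_k}, Z = {z_{i,j} : i ∈ [m], j ∈ {3,…,k}} be pairwise disjoint sets of vertices, and let G₁ be the graph obtained from X ∪ Y ∪ Z by, for each i ∈ [m] and j ∈ {4,…,k}, adding a new vertex x_{i,j} together with a copy of the gadget F_{copy,k}(x_i, x_{i,j}) and a copy of the gadget F_{enc,j,k}(x_{i,j}, z_{i,j−1}, z_{i,j}; y₄,…,y_k). Then a Y-rainbow function h : X ∪ Y ∪ Z → [k] extends to a proper k-coloring of G₁ if and only if the restriction g of h to Z satisfies: for each i ∈ [m], if h(x_i) ∈ {1,2,3} then g(z_{i,3}) = g(z_{i,4}) = … = g(z_{i,k}) = h(x_i), and if h(x_i) = s ∈ {4,…,k} then g(z_{i,3}) = … = g(z_{i,s−1}) ≠ g(z_{i,s}) = … = g(z_{i,k}) with all these values in {1,2,3}. -/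

import Mathlib

/-- `c` is a proper `k`-coloring of `G` with colors in `[k] = {1,…,k}`. -/
def IsProperKColoring {V : Type*} (G : SimpleGraph V) (k : ℕ) (c : V → ℕ) : Prop :=
  (∀ v, c v ∈ Finset.Icc 1 k) ∧ ∀ ⦃x y⦄, G.Adj x y → c x ≠ c y

/-- Index type for the vertices `y₄, …, y_k`. -/
def Yk (k : ℕ) : Type := {i : ℕ // 4 ≤ i ∧ i ≤ k}

/-- Index type for the columns of `Z`: `j ∈ {3,…,k}`. -/
def Zc (k : ℕ) : Type := {j : ℕ // 3 ≤ j ∧ j ≤ k}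

/-- Index type for the `k−1` internal vertices of a copy gadget
`F_{copy,k} = K_{k+1} − uv` (its vertices besides `u` and `v`). -/
def Cc (k : ℕ) : Type := {c : ℕ // 2 ≤ c ∧ c ≤ k}

/-- Internal vertices of the pieces of the gadget `F_{enc,s,k}`: `(r, i)` is
the `i`-th internal vertex of the piece `F_r`, where `r = 1` stands for `F₁`
(internals `v₁,v₂,w₁,w₂`), the piece `F_s` has internals `u',w₁,w₂`, and a
piece `F_r`, `r ∈ {4,…,k} \ {s}`, has internals `u',v₁,v₂,w₁,w₂`. -/
def EncInt (k s : ℕ) : Type :=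
  {p : ℕ × ℕ // (p.1 = 1 ∧ p.2 < 4) ∨
    (4 ≤ p.1 ∧ p.1 ≤ k ∧ ((p.1 = s ∧ p.2 < 3) ∨ (p.1 ≠ s ∧ p.2 < 5)))}

/-- Vertices of the graph `G₁`: the sets `X`, `Y`, `Z`, the vertices
`x_{i,j}` (`xc`), the internal vertices of the copy gadgets
`F_{copy,k}(xᵢ, x_{i,j})` (`ci`), and the internal vertices of the encoding
gadgets `F_{enc,j,k}(x_{i,j}, z_{i,j−1}, z_{i,j}; y₄,…,y_k)` (`ei`). -/
inductive GV (m k : ℕ) : Type where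
  | x : Fin m → GV m k
  | y : Yk k → GV m k
  | z : Fin m → Zc k → GV m k
  | xc : Fin m → Yk k → GV m k
  | ci : Fin m → Yk k → Cc k → GV m k
  | ei : Fin m → Yk k → (ℕ × ℕ) → GV m k

/-- Whether `(r, i) = p` is a legitimate internal vertex of the encoding
gadget with parameter `s`. -/
def encOK (k s : ℕ) (p : ℕ × ℕ) : Prop :=
  (p.1 = 1 ∧ p.2 < 4) ∨
    (4 ≤ p.1 ∧ p.1 ≤ k ∧ ((p.1 = s ∧ p.2 < 3) ∨ (p.1 ≠ s ∧ p.2 < 5)))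

/-- The adjacency (before symmetrization) of the graph `G₁`.  The copy gadget
for `(i,j)` is the complete graph on `{xᵢ, x_{i,j}} ∪ {ci i j c}` minus the
edge `xᵢ x_{i,j}`.  The encoding gadget for `(i,j)` is
`F_{enc,j,k}(u,v,w;y₄,…,y_k)` with `u = x_{i,j}`, `v = z_{i,j−1}`,
`w = z_{i,j}`, glued from the pieces `F₁, F₄, …, F_k`. -/
def grel (m k : ℕ) : GV m k → GV m k → Prop
  | .x i, .ci i' _ _ => i = i'
  | .xc i j, .ci i' j' _ => i = i' ∧ j = j'
  | .ci i j c, .ci i' j' c' => i = i' ∧ j = j' ∧ c ≠ c'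
  | .y _, .z _ _ => True
  | .y jy, .ei _ j p => encOK k j.1 p ∧ ¬(p.1 = jy.1 ∧ p.2 = 0)
  | .xc i j, .ei i' j' p =>
      i = i' ∧ j = j' ∧ encOK k j'.1 p ∧
        (p.1 = 1 ∨ (p.1 = j'.1 ∧ p.2 = 0) ∨ (4 ≤ p.1 ∧ p.1 ≠ j'.1 ∧ p.2 = 0))
  | .z i jz, .ei i' j' p =>
      i = i' ∧ encOK k j'.1 p ∧
        ((jz.1 = j'.1 - 1 ∧
            ((p.1 = 1 ∧ p.2 < 2) ∨ (p.1 = j'.1 ∧ p.2 = 0) ∨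
              (4 ≤ p.1 ∧ p.1 ≠ j'.1 ∧ (p.2 = 1 ∨ p.2 = 2)))) ∨
          (jz.1 = j'.1 ∧
            ((p.1 = 1 ∧ 2 ≤ p.2) ∨ (p.1 = j'.1 ∧ p.2 ≠ 0) ∨
              (4 ≤ p.1 ∧ p.1 ≠ j'.1 ∧ (p.2 = 3 ∨ p.2 = 4)))))
  | .ei i j p, .ei i' j' q =>
      i = i' ∧ j = j' ∧ encOK k j.1 p ∧ encOK k j'.1 q ∧ p.1 = q.1 ∧
        ((p.1 = 1 ∧ (p.2, q.2) ∈ ([(0,1),(2,3)] : List (ℕ × ℕ)))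
          ∨ (p.1 = j.1 ∧ (p.2, q.2) ∈ ([(0,1),(0,2),(1,2)] : List (ℕ × ℕ)))
          ∨ (4 ≤ p.1 ∧ p.1 ≠ j.1 ∧
              (p.2, q.2) ∈ ([(0,1),(0,2),(0,3),(0,4),(1,2),(3,4)] : List (ℕ × ℕ))))
  | _, _ => False

/-- The graph `G₁` of the construction. -/
def G1 (m k : ℕ) : SimpleGraph (GV m k) := SimpleGraph.fromRel (grel m k)

/-- A `Y`-rainbow function `h : X ∪ Y ∪ Z → [k]` extends to a proper
`k`-coloring of `G₁` iff for each `i ∈ [m]`: if `h xᵢ ∈ {1,2,3}` then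
`h` is constantly `h xᵢ` on the row `z_{i,3},…,z_{i,k}`, and if
`h xᵢ = s ∈ {4,…,k}` then on that row `h` takes values in `{1,2,3}`, is
constant on the columns `j < s` and on the columns `j ≥ s`, and these two
values differ. -/

def oth1 (x : ℕ) : ℕ := if x = 1 then 2 else 1
def oth2 (x : ℕ) : ℕ := if x = 3 then 2 else 3

lemma oth1_facts (x : ℕ) : 1 ≤ oth1 x ∧ oth1 x ≤ 2 ∧ oth1 x ≠ x := by
  unfold oth1; split <;> omega
lemma oth2_facts (x : ℕ) : 2 ≤ oth2 x ∧ oth2 x ≤ 3 ∧ oth2 x ≠ x := by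
  unfold oth2; split <;> omega
lemma oth_ne (x : ℕ) : oth1 x ≠ oth2 x := by
  unfold oth1 oth2; split <;> split <;> omega
lemma oth_force {x y : ℕ} (hx1 : 1 ≤ x) (hx3 : x ≤ 3) (hy1 : 1 ≤ y) (hy3 : y ≤ 3)
    (h1 : y ≠ oth1 x) (h2 : y ≠ oth2 x) : y = x := by
  unfold oth1 oth2 at *; split at h1 <;> split at h2 <;> omega

def colE (k a V W jj r t : ℕ) : ℕ :=
  if r = 1 then
    if t = 0 then oth1 V else if t = 1 then oth2 V else if t = 2 then oth1 W else oth2 W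
  else if 4 ≤ r ∧ r ≤ k then
    if r = jj then
      if t = 0 then (if a = jj then W else jj) else if t = 1 then oth1 W else oth2 W
    else
      if t = 0 then (if a = r then V else r)
      else if t = 1 then oth1 V else if t = 2 then oth2 V
      else if t = 3 then oth1 W else oth2 W
  else 1

def jvv (k : ℕ) (j : Yk k) : Zc k := ⟨j.1 - 1, by have := j.2; omega⟩
def jww (k : ℕ) (j : Yk k) : Zc k := ⟨j.1, by have := j.2; omega⟩

lemma jvv_val (k : ℕ) (j : Yk k) : (jvv k j).1 = j.1 - 1 := rfl
lemma jww_val (k : ℕ) (j : Yk k) : (jww k j).1 = j.1 := rfl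

def col (m k : ℕ) (h : GV m k → ℕ) : GV m k → ℕ
  | .x i => h (.x i)
  | .y jy => h (.y jy)
  | .z i jz => h (.z i jz)
  | .xc i _ => h (.x i)
  | .ci i _ cc => if cc.1 ≤ h (.x i) then cc.1 - 1 else cc.1
  | .ei i j p => colE k (h (.x i)) (h (.z i (jvv k j))) (h (.z i (jww k j))) j.1 p.1 p.2




section Back
variable (m k : ℕ) (h : GV m k → ℕ)

lemma col_bounds (hk : 4 ≤ k)
    (hxb : ∀ i, 1 ≤ h (.x i) ∧ h (.x i) ≤ k)
    (hyb : ∀ j : Yk k, 1 ≤ h (.y j) ∧ h (.y j) ≤ k)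
    (hzb : ∀ i (jz : Zc k), 1 ≤ h (.z i jz) ∧ h (.z i jz) ≤ k) :
    ∀ v, col m k h v ∈ Finset.Icc 1 k := by
  intro v
  rw [Finset.mem_Icc]
  cases v with
  | x i => exact hxb i
  | y jy => exact hyb jy
  | z i jz => exact hzb i jz
  | xc i j => exact hxb i
  | ci i j cc =>
    simp only [col]
    have := cc.2; have := hxb i
    split <;> omega
  | ei i j p =>
    simp only [col]
    have hV := hzb i (jvv k j)
    have hW := hzb i (jww k j)
    have o1 := oth1_facts (h (.z i (jvv k j))); have o2 := oth2_facts (h (.z i (jvv k j)))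
    have o3 := oth1_facts (h (.z i (jww k j))); have o4 := oth2_facts (h (.z i (jww k j)))
    have hj := j.2
    unfold colE
    split_ifs <;> omega
end Back

set_option maxHeartbeats 1000000 in
lemma col_ne (m k : ℕ) (h : GV m k → ℕ) (hk : 4 ≤ k)
    (hrainbow : ∀ j : Yk k, h (.y j) = j.1)
    (hxb : ∀ i, 1 ≤ h (.x i) ∧ h (.x i) ≤ k)
    (hz13 : ∀ i (jz : Zc k), 1 ≤ h (.z i jz) ∧ h (.z i jz) ≤ 3)
    (heqq : ∀ i (jz jz' : Zc k), (jz.1 < h (.x i) ↔ jz'.1 < h (.x i)) →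
      h (.z i jz) = h (.z i jz'))
    (hnee : ∀ i (jz jz' : Zc k), jz.1 < h (.x i) → h (.x i) ≤ jz'.1 →
      h (.z i jz) ≠ h (.z i jz'))
    (hlow : ∀ i, h (.x i) ≤ 3 → ∀ jz : Zc k, h (.z i jz) = h (.x i)) :
    ∀ x y, grel m k x y → col m k h x ≠ col m k h y := by
  intro x y hrel
  cases x with
  | x i =>
    cases y <;> try exact hrel.elim
    case ci i' j cc =>
      obtain rfl : i = i' := hrel
      simp only [col]
      have := cc.2
      split <;> omega
  | y jy =>
    cases y <;> try exact hrel.elim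
    case z i jz =>
      simp only [col]
      rw [hrainbow jy]
      have := hz13 i jz
      have := jy.2
      omega
    case ei i j p =>
      obtain ⟨henc, hny⟩ : encOK k j.1 p ∧ ¬(p.1 = jy.1 ∧ p.2 = 0) := hrel
      simp only [col]
      rw [hrainbow jy]
      have hV := hz13 i (jvv k j)
      have hW := hz13 i (jww k j)
      have o1 := oth1_facts (h (.z i (jvv k j))); have o2 := oth2_facts (h (.z i (jvv k j)))
      have o3 := oth1_facts (h (.z i (jww k j))); have o4 := oth2_facts (h (.z i (jww k j)))
      have hj := j.2
      have hv1 := jvv_val k j; have hw1 := jww_val k j; have hyj := jy.2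
      have hv1 := jvv_val k j; have hw1 := jww_val k j
      have n1 := oth_ne (h (.z i (jvv k j))); have n2 := oth_ne (h (.z i (jww k j)))
      unfold encOK at henc
      unfold colE
      split_ifs <;> omega
  | z i jz =>
    cases y <;> try exact hrel.elim
    case ei i' j p =>
      obtain ⟨rfl, henc, hcase⟩ : i = i' ∧ encOK k j.1 p ∧ _ := hrel
      simp only [col]
      have hV := hz13 i (jvv k j)
      have hW := hz13 i (jww k j)
      have d1 : ¬(h (.x i) = j.1) ∨
          h (.z i (jvv k j)) ≠ h (.z i (jww k j)) := by
        by_cases ha : h (.x i) = j.1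
        · refine Or.inr (hnee i (jvv k j) (jww k j) ?_ ?_)
          · show j.1 - 1 < h (.x i); have := j.2; omega
          · show h (.x i) ≤ j.1; omega
        · exact Or.inl ha
      rcases hcase with ⟨hjz, hq⟩ | ⟨hjz, hq⟩
      · rw [show jz = jvv k j from Subtype.ext hjz]
        have o1 := oth1_facts (h (.z i (jvv k j))); have o2 := oth2_facts (h (.z i (jvv k j)))
        have o3 := oth1_facts (h (.z i (jww k j))); have o4 := oth2_facts (h (.z i (jww k j)))
        have hj := j.2
        have hv1 := jvv_val k j; have hw1 := jww_val k j
        have n1 := oth_ne (h (.z i (jvv k j))); have n2 := oth_ne (h (.z i (jww k j)))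
        unfold encOK at henc
        unfold colE
        split_ifs <;> omega
      · rw [show jz = jww k j from Subtype.ext hjz]
        have o1 := oth1_facts (h (.z i (jvv k j))); have o2 := oth2_facts (h (.z i (jvv k j)))
        have o3 := oth1_facts (h (.z i (jww k j))); have o4 := oth2_facts (h (.z i (jww k j)))
        have hj := j.2
        have hv1 := jvv_val k j; have hw1 := jww_val k j
        have n1 := oth_ne (h (.z i (jvv k j))); have n2 := oth_ne (h (.z i (jww k j)))
        unfold encOK at henc
        unfold colE
        split_ifs <;> omega
  | xc i j =>
    cases y <;> try exact hrel.elim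
    case ci i' j' cc =>
      obtain ⟨rfl, rfl⟩ : i = i' ∧ j = j' := hrel
      simp only [col]
      have := cc.2; have := hxb i
      split <;> omega
    case ei i' j' p =>
      obtain ⟨rfl, rfl, henc, hpos⟩ : i = i' ∧ j = j' ∧ encOK k j'.1 p ∧ _ := hrel
      simp only [col]
      have hV := hz13 i (jvv k j)
      have hW := hz13 i (jww k j)
      have d3 : 4 ≤ h (.x i) ∨
          (h (.z i (jvv k j)) = h (.x i) ∧
           h (.z i (jww k j)) = h (.x i)) := by
        rcases Nat.lt_or_ge (h (.x i)) 4 with hlt | hge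
        · exact Or.inr ⟨hlow i (by omega) _, hlow i (by omega) _⟩
        · exact Or.inl hge
      have o1 := oth1_facts (h (.z i (jvv k j))); have o2 := oth2_facts (h (.z i (jvv k j)))
      have o3 := oth1_facts (h (.z i (jww k j))); have o4 := oth2_facts (h (.z i (jww k j)))
      have hj := j.2
      have hv1 := jvv_val k j; have hw1 := jww_val k j; have hx := hxb i
      have hv1 := jvv_val k j; have hw1 := jww_val k j
      have n1 := oth_ne (h (.z i (jvv k j))); have n2 := oth_ne (h (.z i (jww k j)))
      unfold encOK at henc
      unfold colE
      split_ifs <;> omega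
  | ci i j cc =>
    cases y <;> try exact hrel.elim
    case ci i' j' cc' =>
      obtain ⟨rfl, rfl, hne⟩ : i = i' ∧ j = j' ∧ cc ≠ cc' := hrel
      have hne' : cc.1 ≠ cc'.1 := fun hh => hne (Subtype.ext hh)
      simp only [col]
      have := cc.2; have := cc'.2
      split <;> split <;> omega
  | ei i j p =>
    cases y <;> try exact hrel.elim
    case ei i' j' q =>
      obtain ⟨r, t⟩ := p
      obtain ⟨r', t'⟩ := q
      obtain ⟨rfl, rfl, henc, henc', hrr, hlist⟩ :
          i = i' ∧ j = j' ∧ encOK k j.1 (r, t) ∧ encOK k j'.1 (r', t') ∧ r = r' ∧ _ := hrel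
      subst hrr
      simp only [List.mem_cons, List.not_mem_nil, Prod.mk.injEq, or_false] at hlist
      simp only [col]
      have hV := hz13 i (jvv k j)
      have hW := hz13 i (jww k j)
      have d1 : ¬(h (.x i) = j.1) ∨
          h (.z i (jvv k j)) ≠ h (.z i (jww k j)) := by
        by_cases ha : h (.x i) = j.1
        · refine Or.inr (hnee i (jvv k j) (jww k j) ?_ ?_)
          · show j.1 - 1 < h (.x i); have := j.2; omega
          · show h (.x i) ≤ j.1; omega
        · exact Or.inl ha
      have d2 : h (.x i) = j.1 ∨ h (.x i) ≤ 3 ∨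
          h (.z i (jvv k j)) = h (.z i (jww k j)) := by
        by_cases ha : h (.x i) = j.1
        · exact Or.inl ha
        · rcases Nat.lt_or_ge (h (.x i)) 4 with hlt | hge
          · exact Or.inr (Or.inl (by omega))
          · refine Or.inr (Or.inr (heqq i (jvv k j) (jww k j) ?_))
            show j.1 - 1 < h (.x i) ↔ j.1 < h (.x i)
            have := j.2; omega
      have o1 := oth1_facts (h (.z i (jvv k j))); have o2 := oth2_facts (h (.z i (jvv k j)))
      have o3 := oth1_facts (h (.z i (jww k j))); have o4 := oth2_facts (h (.z i (jww k j)))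
      have hj := j.2
      have hv1 := jvv_val k j; have hw1 := jww_val k j; have hx := hxb i
      have hv1 := jvv_val k j; have hw1 := jww_val k j
      have n1 := oth_ne (h (.z i (jvv k j))); have n2 := oth_ne (h (.z i (jww k j)))
      unfold encOK at henc henc'
      unfold colE
      split_ifs <;> omega

set_option maxHeartbeats 1000000 in
lemma adj_of_grel {m k : ℕ} {x y : GV m k} (hne : x ≠ y) (hr : grel m k x y) :
    (G1 m k).Adj x y := by
  rw [G1, SimpleGraph.fromRel_adj]; exact ⟨hne, Or.inl hr⟩

lemma ei_ne {m k : ℕ} {i : Fin m} {j : Yk k} {p q : ℕ × ℕ} (h : p ≠ q) :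
    (.ei i j p : GV m k) ≠ .ei i j q := by
  intro hh; injection hh with h1 h2 h3; exact h h3

lemma cbounds {m k : ℕ} {c : GV m k → ℕ} (hc : IsProperKColoring (G1 m k) k c)
    (v : GV m k) : 1 ≤ c v ∧ c v ≤ k := Finset.mem_Icc.1 (hc.1 v)

/-- a vertex adjacent to all of `y₄,…,y_k` has color `≤ 3`. -/
lemma no4 {m k : ℕ} {c : GV m k → ℕ} (hc : IsProperKColoring (G1 m k) k c)
    (hcy : ∀ t : Yk k, c (.y t) = t.1) (v : GV m k)
    (hadj : ∀ t : Yk k, (G1 m k).Adj (.y t) v) : c v ≤ 3 := by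
  by_contra hgt
  have hb := cbounds hc v
  have := hc.2 (hadj ⟨c v, by omega, hb.2⟩)
  exact this (hcy _)

lemma z_le3 {m k : ℕ} {c : GV m k → ℕ} (hk : 4 ≤ k) (hc : IsProperKColoring (G1 m k) k c)
    (hcy : ∀ t : Yk k, c (.y t) = t.1) (i : Fin m) (jz : Zc k) : c (.z i jz) ≤ 3 := by
  refine no4 hc hcy _ (fun t => adj_of_grel (by rintro ⟨⟩) trivial)

lemma ei_le3 {m k : ℕ} {c : GV m k → ℕ} (hk : 4 ≤ k) (hc : IsProperKColoring (G1 m k) k c)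
    (hcy : ∀ t : Yk k, c (.y t) = t.1) (i : Fin m) (j : Yk k) (p : ℕ × ℕ)
    (henc : encOK k j.1 p) (hp : p.1 = 1 ∨ p.2 ≠ 0) : c (.ei i j p) ≤ 3 := by
  refine no4 hc hcy _ (fun t => adj_of_grel (by rintro ⟨⟩) ?_)
  show encOK k j.1 p ∧ ¬(p.1 = t.1 ∧ p.2 = 0)
  have ht := t.2
  refine ⟨henc, ?_⟩
  rcases hp with h1 | h2 <;> omega

lemma ei_u_le3 {m k : ℕ} {c : GV m k → ℕ} (hk : 4 ≤ k) (hc : IsProperKColoring (G1 m k) k c)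
    (hcy : ∀ t : Yk k, c (.y t) = t.1) (i : Fin m) (j : Yk k) (r : ℕ)
    (henc : encOK k j.1 (r, 0)) (hr4 : 4 ≤ r) (hxc : c (.xc i j) = r) :
    c (.ei i j (r, 0)) ≤ 3 := by
  by_contra hgt
  have hb := cbounds hc (.ei i j (r, 0))
  by_cases hcv : c (.ei i j (r, 0)) = r
  · have := hc.2 (adj_of_grel (x := GV.xc i j) (y := GV.ei i j (r, 0)) (by rintro ⟨⟩)
      (show (i = i ∧ j = j ∧ encOK k j.1 (r,0) ∧ ((r,0).1 = 1 ∨ ((r,0).1 = j.1 ∧ (r,0).2 = 0) ∨ (4 ≤ (r,0).1 ∧ (r,0).1 ≠ j.1 ∧ (r,0).2 = 0))) by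
        refine ⟨rfl, rfl, henc, ?_⟩
        by_cases hrj : r = j.1
        · exact Or.inr (Or.inl ⟨hrj, rfl⟩)
        · exact Or.inr (Or.inr ⟨hr4, hrj, rfl⟩)))
    rw [hxc, hcv] at this
    exact this rfl
  · have := hc.2 (adj_of_grel (x := GV.y ⟨c (.ei i j (r,0)), by omega, hb.2⟩) (y := GV.ei i j (r, 0))
      (by rintro ⟨⟩) (show encOK k j.1 (r,0) ∧ ¬(r = c (.ei i j (r,0)) ∧ 0 = 0) from
        ⟨henc, by simp; omega⟩))
    exact this (hcy _)

lemma copy_eq {m k : ℕ} {c : GV m k → ℕ} (hk : 4 ≤ k) (hc : IsProperKColoring (G1 m k) k c)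
    (i : Fin m) (j : Yk k) : c (.xc i j) = c (.x i) := by
  by_contra hne
  classical
  set f : ℕ → ℕ := fun n => if hn : 2 ≤ n ∧ n ≤ k then c (.ci i j ⟨n, hn⟩) else 0 with hf
  have hmaps : ∀ n ∈ Finset.Icc 2 k,
      f n ∈ (Finset.Icc 1 k) \ {c (.x i), c (.xc i j)} := by
    intro n hn
    rw [Finset.mem_Icc] at hn
    rw [Finset.mem_sdiff]
    simp only [hf, dif_pos hn]
    refine ⟨hc.1 _, ?_⟩
    simp only [Finset.mem_insert, Finset.mem_singleton]
    push_neg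
    constructor
    · exact (hc.2 (adj_of_grel (x := GV.x i) (y := GV.ci i j ⟨n, hn⟩) (by rintro ⟨⟩) (show i = i from rfl))).symm
    · exact (hc.2 (adj_of_grel (x := GV.xc i j) (y := GV.ci i j ⟨n, hn⟩) (by rintro ⟨⟩)
        (show i = i ∧ j = j from ⟨rfl, rfl⟩))).symm
  have hinj : Set.InjOn f (Finset.Icc 2 k) := by
    intro n hn n' hn' heq
    by_contra hnn
    rw [Finset.coe_Icc, Set.mem_Icc] at hn hn'
    have hnn' : (⟨n, hn⟩ : Cc k) ≠ ⟨n', hn'⟩ := fun hh => hnn (congrArg Subtype.val hh)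
    have := hc.2 (adj_of_grel (x := GV.ci i j ⟨n, hn⟩) (y := GV.ci i j ⟨n', hn'⟩)
      (by intro hh; injection hh with h1 h2 h3; exact hnn' h3)
      (show i = i ∧ j = j ∧ _ ≠ _ from ⟨rfl, rfl, hnn'⟩))
    rw [hf] at heq
    simp only [dif_pos hn, dif_pos hn'] at heq
    exact this heq
  have hcard := Finset.card_le_card_of_injOn f hmaps hinj
  have hsub : ({c (.x i), c (.xc i j)} : Finset ℕ) ⊆ Finset.Icc 1 k := by
    intro v hv
    simp only [Finset.mem_insert, Finset.mem_singleton] at hv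
    rcases hv with rfl | rfl
    · exact hc.1 _
    · exact hc.1 _
  rw [Finset.card_sdiff_of_subset hsub, Finset.card_pair (Ne.symm hne)] at hcard
  rw [Nat.card_Icc, Nat.card_Icc] at hcard
  omega

set_option maxHeartbeats 1600000 in
lemma enc_force {m k : ℕ} {c : GV m k → ℕ} (hk : 4 ≤ k) (hc : IsProperKColoring (G1 m k) k c)
    (hcy : ∀ t : Yk k, c (.y t) = t.1) (i : Fin m) (j : Yk k) :
    (c (.xc i j) ≤ 3 → c (.z i (jvv k j)) = c (.xc i j) ∧ c (.z i (jww k j)) = c (.xc i j)) ∧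
    (c (.xc i j) = j.1 → c (.z i (jvv k j)) ≠ c (.z i (jww k j))) ∧
    (4 ≤ c (.xc i j) → c (.xc i j) ≠ j.1 →
      c (.z i (jvv k j)) = c (.z i (jww k j))) := by
  have hj := j.2
  have hxb := cbounds hc (.xc i j)
  have hVb := cbounds hc (.z i (jvv k j))
  have hWb := cbounds hc (.z i (jww k j))
  have hV3 := z_le3 hk hc hcy i (jvv k j)
  have hW3 := z_le3 hk hc hcy i (jww k j)
  have D : ∀ p q : ℕ × ℕ, p ≠ q → grel m k (.ei i j p) (.ei i j q) →
      c (.ei i j p) ≠ c (.ei i j q) := fun p q hne hr => hc.2 (adj_of_grel (ei_ne hne) hr)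
  have zD : ∀ (jz : Zc k) (p : ℕ × ℕ), grel m k (.z i jz) (.ei i j p) →
      c (.z i jz) ≠ c (.ei i j p) := fun jz p hr => hc.2 (adj_of_grel (by rintro ⟨⟩) hr)
  have xD : ∀ p : ℕ × ℕ, grel m k (.xc i j) (.ei i j p) →
      c (.xc i j) ≠ c (.ei i j p) := fun p hr => hc.2 (adj_of_grel (by rintro ⟨⟩) hr)
  refine ⟨?_, ?_, ?_⟩
  · -- a ≤ 3 : piece F₁
    intro ha
    have e0 : encOK k j.1 (1, 0) := Or.inl ⟨rfl, by omega⟩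
    have e1 : encOK k j.1 (1, 1) := Or.inl ⟨rfl, by omega⟩
    have e2 : encOK k j.1 (1, 2) := Or.inl ⟨rfl, by omega⟩
    have e3 : encOK k j.1 (1, 3) := Or.inl ⟨rfl, by omega⟩
    have b0 := ei_le3 hk hc hcy i j (1, 0) e0 (Or.inl rfl)
    have b1 := ei_le3 hk hc hcy i j (1, 1) e1 (Or.inl rfl)
    have b2 := ei_le3 hk hc hcy i j (1, 2) e2 (Or.inl rfl)
    have b3 := ei_le3 hk hc hcy i j (1, 3) e3 (Or.inl rfl)
    have l0 := (cbounds hc (.ei i j (1, 0))).1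
    have l1 := (cbounds hc (.ei i j (1, 1))).1
    have l2 := (cbounds hc (.ei i j (1, 2))).1
    have l3 := (cbounds hc (.ei i j (1, 3))).1
    have d01 := D (1, 0) (1, 1) (by simp) ⟨rfl, rfl, e0, e1, rfl, Or.inl ⟨rfl, by simp⟩⟩
    have d23 := D (1, 2) (1, 3) (by simp) ⟨rfl, rfl, e2, e3, rfl, Or.inl ⟨rfl, by simp⟩⟩
    have zv0 := zD (jvv k j) (1, 0) ⟨rfl, e0, Or.inl ⟨jvv_val k j, Or.inl ⟨rfl, by omega⟩⟩⟩
    have zv1 := zD (jvv k j) (1, 1) ⟨rfl, e1, Or.inl ⟨jvv_val k j, Or.inl ⟨rfl, by omega⟩⟩⟩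
    have zw2 := zD (jww k j) (1, 2) ⟨rfl, e2, Or.inr ⟨jww_val k j, Or.inl ⟨rfl, by omega⟩⟩⟩
    have zw3 := zD (jww k j) (1, 3) ⟨rfl, e3, Or.inr ⟨jww_val k j, Or.inl ⟨rfl, by omega⟩⟩⟩
    have x0 := xD (1, 0) ⟨rfl, rfl, e0, Or.inl rfl⟩
    have x1 := xD (1, 1) ⟨rfl, rfl, e1, Or.inl rfl⟩
    have x2 := xD (1, 2) ⟨rfl, rfl, e2, Or.inl rfl⟩
    have x3 := xD (1, 3) ⟨rfl, rfl, e3, Or.inl rfl⟩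
    omega
  · -- a = j.1 : piece F_s
    intro ha
    have e0 : encOK k j.1 (j.1, 0) := Or.inr ⟨hj.1, hj.2, Or.inl ⟨rfl, by omega⟩⟩
    have e1 : encOK k j.1 (j.1, 1) := Or.inr ⟨hj.1, hj.2, Or.inl ⟨rfl, by omega⟩⟩
    have e2 : encOK k j.1 (j.1, 2) := Or.inr ⟨hj.1, hj.2, Or.inl ⟨rfl, by omega⟩⟩
    have u3 := ei_u_le3 hk hc hcy i j j.1 e0 hj.1 ha
    have b1 := ei_le3 hk hc hcy i j (j.1, 1) e1 (Or.inr (by simp))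
    have b2 := ei_le3 hk hc hcy i j (j.1, 2) e2 (Or.inr (by simp))
    have l0 := (cbounds hc (.ei i j (j.1, 0))).1
    have l1 := (cbounds hc (.ei i j (j.1, 1))).1
    have l2 := (cbounds hc (.ei i j (j.1, 2))).1
    have d01 := D (j.1, 0) (j.1, 1) (by simp)
      ⟨rfl, rfl, e0, e1, rfl, Or.inr (Or.inl ⟨rfl, by simp⟩)⟩
    have d02 := D (j.1, 0) (j.1, 2) (by simp)
      ⟨rfl, rfl, e0, e2, rfl, Or.inr (Or.inl ⟨rfl, by simp⟩)⟩
    have d12 := D (j.1, 1) (j.1, 2) (by simp)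
      ⟨rfl, rfl, e1, e2, rfl, Or.inr (Or.inl ⟨rfl, by simp⟩)⟩
    have zv0 := zD (jvv k j) (j.1, 0) ⟨rfl, e0, Or.inl ⟨jvv_val k j, Or.inr (Or.inl ⟨rfl, rfl⟩)⟩⟩
    have zw1 := zD (jww k j) (j.1, 1) ⟨rfl, e1, Or.inr ⟨jww_val k j, Or.inr (Or.inl ⟨rfl, by simp⟩)⟩⟩
    have zw2 := zD (jww k j) (j.1, 2) ⟨rfl, e2, Or.inr ⟨jww_val k j, Or.inr (Or.inl ⟨rfl, by simp⟩)⟩⟩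
    omega
  · -- a ∈ {4,…,k} \ {j} : piece F_a
    intro ha4 hanej
    have e0 : encOK k j.1 (c (.xc i j), 0) := Or.inr ⟨ha4, hxb.2, Or.inr ⟨hanej, by omega⟩⟩
    have e1 : encOK k j.1 (c (.xc i j), 1) := Or.inr ⟨ha4, hxb.2, Or.inr ⟨hanej, by omega⟩⟩
    have e2 : encOK k j.1 (c (.xc i j), 2) := Or.inr ⟨ha4, hxb.2, Or.inr ⟨hanej, by omega⟩⟩
    have e3 : encOK k j.1 (c (.xc i j), 3) := Or.inr ⟨ha4, hxb.2, Or.inr ⟨hanej, by omega⟩⟩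
    have e4 : encOK k j.1 (c (.xc i j), 4) := Or.inr ⟨ha4, hxb.2, Or.inr ⟨hanej, by omega⟩⟩
    have u3 := ei_u_le3 hk hc hcy i j (c (.xc i j)) e0 ha4 rfl
    have b1 := ei_le3 hk hc hcy i j (c (.xc i j), 1) e1 (Or.inr (by simp))
    have b2 := ei_le3 hk hc hcy i j (c (.xc i j), 2) e2 (Or.inr (by simp))
    have b3 := ei_le3 hk hc hcy i j (c (.xc i j), 3) e3 (Or.inr (by simp))
    have b4 := ei_le3 hk hc hcy i j (c (.xc i j), 4) e4 (Or.inr (by simp))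
    have l0 := (cbounds hc (.ei i j (c (.xc i j), 0))).1
    have l1 := (cbounds hc (.ei i j (c (.xc i j), 1))).1
    have l2 := (cbounds hc (.ei i j (c (.xc i j), 2))).1
    have l3 := (cbounds hc (.ei i j (c (.xc i j), 3))).1
    have l4 := (cbounds hc (.ei i j (c (.xc i j), 4))).1
    have d01 := D (c (.xc i j), 0) (c (.xc i j), 1) (by simp)
      ⟨rfl, rfl, e0, e1, rfl, Or.inr (Or.inr ⟨ha4, hanej, by simp⟩)⟩
    have d02 := D (c (.xc i j), 0) (c (.xc i j), 2) (by simp)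
      ⟨rfl, rfl, e0, e2, rfl, Or.inr (Or.inr ⟨ha4, hanej, by simp⟩)⟩
    have d03 := D (c (.xc i j), 0) (c (.xc i j), 3) (by simp)
      ⟨rfl, rfl, e0, e3, rfl, Or.inr (Or.inr ⟨ha4, hanej, by simp⟩)⟩
    have d04 := D (c (.xc i j), 0) (c (.xc i j), 4) (by simp)
      ⟨rfl, rfl, e0, e4, rfl, Or.inr (Or.inr ⟨ha4, hanej, by simp⟩)⟩
    have d12 := D (c (.xc i j), 1) (c (.xc i j), 2) (by simp)
      ⟨rfl, rfl, e1, e2, rfl, Or.inr (Or.inr ⟨ha4, hanej, by simp⟩)⟩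
    have d34 := D (c (.xc i j), 3) (c (.xc i j), 4) (by simp)
      ⟨rfl, rfl, e3, e4, rfl, Or.inr (Or.inr ⟨ha4, hanej, by simp⟩)⟩
    have zv1 := zD (jvv k j) (c (.xc i j), 1)
      ⟨rfl, e1, Or.inl ⟨jvv_val k j, Or.inr (Or.inr ⟨ha4, hanej, Or.inl rfl⟩)⟩⟩
    have zv2 := zD (jvv k j) (c (.xc i j), 2)
      ⟨rfl, e2, Or.inl ⟨jvv_val k j, Or.inr (Or.inr ⟨ha4, hanej, Or.inr rfl⟩)⟩⟩
    have zw3 := zD (jww k j) (c (.xc i j), 3)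
      ⟨rfl, e3, Or.inr ⟨jww_val k j, Or.inr (Or.inr ⟨ha4, hanej, Or.inl rfl⟩)⟩⟩
    have zw4 := zD (jww k j) (c (.xc i j), 4)
      ⟨rfl, e4, Or.inr ⟨jww_val k j, Or.inr (Or.inr ⟨ha4, hanej, Or.inr rfl⟩)⟩⟩
    have x0 := xD (c (.xc i j), 0) ⟨rfl, rfl, e0, Or.inr (Or.inr ⟨ha4, hanej, rfl⟩)⟩
    omega

set_option maxHeartbeats 1600000 in
theorem G1_extension (m k : ℕ) (hk : 4 ≤ k) (h : GV m k → ℕ)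
    (hX : ∀ i, h (.x i) ∈ Finset.Icc 1 k)
    (hY : ∀ j : Yk k, h (.y j) ∈ Finset.Icc 1 k)
    (hZ : ∀ i, ∀ jz : Zc k, h (.z i jz) ∈ Finset.Icc 1 k)
    (hrainbow : ∀ j : Yk k, h (.y j) = j.1) :
    (∃ c : GV m k → ℕ, IsProperKColoring (G1 m k) k c ∧
        (∀ i, c (.x i) = h (.x i)) ∧ (∀ j : Yk k, c (.y j) = h (.y j)) ∧
        (∀ i, ∀ jz : Zc k, c (.z i jz) = h (.z i jz))) ↔
      ∀ i : Fin m,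
        (h (.x i) ∈ ({1, 2, 3} : Set ℕ) → ∀ jz : Zc k, h (.z i jz) = h (.x i)) ∧
        (h (.x i) ∈ Finset.Icc 4 k →
          (∀ jz : Zc k, h (.z i jz) ∈ ({1, 2, 3} : Set ℕ)) ∧
          (∀ jz jz' : Zc k, jz.1 < h (.x i) → jz'.1 < h (.x i) →
            h (.z i jz) = h (.z i jz')) ∧
          (∀ jz jz' : Zc k, h (.x i) ≤ jz.1 → h (.x i) ≤ jz'.1 →
            h (.z i jz) = h (.z i jz')) ∧
          (∀ jz jz' : Zc k, jz.1 < h (.x i) → h (.x i) ≤ jz'.1 →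
            h (.z i jz) ≠ h (.z i jz'))) := by
  have hxb : ∀ i, 1 ≤ h (.x i) ∧ h (.x i) ≤ k := fun i => Finset.mem_Icc.1 (hX i)
  constructor
  · rintro ⟨c, hc, hcx, hcy0, hcz⟩ i
    have hcy : ∀ t : Yk k, c (.y t) = t.1 := fun t => (hcy0 t).trans (hrainbow t)
    have hcopy : ∀ j : Yk k, c (.xc i j) = h (.x i) :=
      fun j => (copy_eq hk hc i j).trans (hcx i)
    have hz3 : ∀ jz : Zc k, h (.z i jz) ≤ 3 :=
      fun jz => (hcz i jz) ▸ z_le3 hk hc hcy i jz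
    have hzb : ∀ jz : Zc k, 1 ≤ h (.z i jz) :=
      fun jz => (hcz i jz) ▸ (cbounds hc _).1
    have E1 : h (.x i) ≤ 3 → ∀ j : Yk k,
        h (.z i (jvv k j)) = h (.x i) ∧ h (.z i (jww k j)) = h (.x i) := by
      intro ha j
      have := (enc_force hk hc hcy i j).1 (by rw [hcopy j]; exact ha)
      rwa [hcopy j, hcz i (jvv k j), hcz i (jww k j)] at this
    have E2 : ∀ j : Yk k, h (.x i) = j.1 →
        h (.z i (jvv k j)) ≠ h (.z i (jww k j)) := by
      intro j ha
      have := (enc_force hk hc hcy i j).2.1 ((hcopy j).trans ha)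
      rwa [hcz i (jvv k j), hcz i (jww k j)] at this
    have E3 : ∀ j : Yk k, 4 ≤ h (.x i) → h (.x i) ≠ j.1 →
        h (.z i (jvv k j)) = h (.z i (jww k j)) := by
      intro j ha hne
      have := (enc_force hk hc hcy i j).2.2 (by rw [hcopy j]; exact ha)
        (by rw [hcopy j]; exact hne)
      rwa [hcz i (jvv k j), hcz i (jww k j)] at this
    constructor
    · intro hmem jz
      have ha : h (.x i) ≤ 3 := by
        simp only [Set.mem_insert_iff, Set.mem_singleton_iff] at hmem; omega
      rcases Nat.lt_or_ge jz.1 4 with h3 | h4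
      · have hj4 : (4:ℕ) ≤ 4 ∧ 4 ≤ k := ⟨le_refl 4, hk⟩
        have := (E1 ha ⟨4, hj4⟩).1
        have ejz : jz = jvv k ⟨4, hj4⟩ :=
          Subtype.ext (by show jz.1 = 3; have := jz.2; omega)
        rw [ejz]; exact this
      · have hj : 4 ≤ jz.1 ∧ jz.1 ≤ k := ⟨h4, jz.2.2⟩
        have := (E1 ha ⟨jz.1, hj⟩).2
        have ejz : jz = jww k ⟨jz.1, hj⟩ := Subtype.ext rfl
        rw [ejz]; exact this
    · intro hmem
      obtain ⟨ha4, hak⟩ := Finset.mem_Icc.1 hmem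
      -- constancy below
      have claimB : ∀ n (hnk : 3 + n ≤ k), 3 + n < h (.x i) →
          h (.z i ⟨3 + n, by omega, hnk⟩) = h (.z i ⟨3, by omega, by omega⟩) := by
        intro n
        induction n with
        | zero => intro _ _; rfl
        | succ n ih =>
          intro hnk hna
          have hj : 4 ≤ 3 + n + 1 ∧ 3 + n + 1 ≤ k := by omega
          have hE := E3 ⟨3 + n + 1, hj⟩ ha4 (by show h (.x i) ≠ 3 + n + 1; omega)
          show h (.z i (jww k ⟨3 + n + 1, hj⟩)) = h (.z i ⟨3, by omega, by omega⟩)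
          rw [← hE]
          show h (.z i ⟨3 + n, by omega, by omega⟩) = h (.z i ⟨3, by omega, by omega⟩)
          exact ih (by omega) (by omega)
      have claimB' : ∀ jz : Zc k, jz.1 < h (.x i) →
          h (.z i jz) = h (.z i ⟨3, by omega, by omega⟩) := by
        intro jz hlt
        have h2 := jz.2
        have e : jz = ⟨3 + (jz.1 - 3), by omega, by omega⟩ := Subtype.ext (by show jz.1 = 3 + (jz.1 - 3); omega)
        rw [e]
        exact claimB (jz.1 - 3) (by omega) (by omega)
      -- constancy above
      have claimC : ∀ n (hnk : h (.x i) + n ≤ k),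
          h (.z i ⟨h (.x i) + n, by omega, hnk⟩) =
          h (.z i ⟨h (.x i), by omega, by omega⟩) := by
        intro n
        induction n with
        | zero => intro _; rfl
        | succ n ih =>
          intro hnk
          have hj : 4 ≤ h (.x i) + n + 1 ∧ h (.x i) + n + 1 ≤ k := by omega
          have hE := E3 ⟨h (.x i) + n + 1, hj⟩ ha4
            (by show h (.x i) ≠ h (.x i) + n + 1; omega)
          show h (.z i (jww k ⟨h (.x i) + n + 1, hj⟩)) =
            h (.z i ⟨h (.x i), by omega, by omega⟩)
          rw [← hE]
          show h (.z i ⟨h (.x i) + n, by omega, by omega⟩) =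
            h (.z i ⟨h (.x i), by omega, by omega⟩)
          exact ih (by omega)
      have claimC' : ∀ jz : Zc k, h (.x i) ≤ jz.1 →
          h (.z i jz) = h (.z i ⟨h (.x i), by omega, by omega⟩) := by
        intro jz hge
        have h2 := jz.2
        have e : jz = ⟨h (.x i) + (jz.1 - h (.x i)), by omega, by omega⟩ :=
          Subtype.ext (by show jz.1 = h (.x i) + (jz.1 - h (.x i)); omega)
        rw [e]
        exact claimC (jz.1 - h (.x i)) (by omega)
      refine ⟨?_, ?_, ?_, ?_⟩
      · intro jz
        have := hz3 jz; have := hzb jz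
        simp only [Set.mem_insert_iff, Set.mem_singleton_iff]
        omega
      · exact fun jz jz' l l' => (claimB' jz l).trans (claimB' jz' l').symm
      · exact fun jz jz' l l' => (claimC' jz l).trans (claimC' jz' l').symm
      · intro jz jz' hlt hge
        have hja : 4 ≤ h (.x i) ∧ h (.x i) ≤ k := ⟨ha4, hak⟩
        have hE := E2 ⟨h (.x i), hja⟩ rfl
        rw [claimB' (jvv k ⟨h (.x i), hja⟩) (by show h (.x i) - 1 < h (.x i); omega),
          claimC' (jww k ⟨h (.x i), hja⟩) (by show h (.x i) ≤ h (.x i); exact le_refl _)] at hE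
        rw [claimB' jz hlt, claimC' jz' hge]
        exact hE
  · intro hR
    have hyb : ∀ t : Yk k, 1 ≤ h (.y t) ∧ h (.y t) ≤ k := fun t => Finset.mem_Icc.1 (hY t)
    have hzb : ∀ i (jz : Zc k), 1 ≤ h (.z i jz) ∧ h (.z i jz) ≤ k :=
      fun i jz => Finset.mem_Icc.1 (hZ i jz)
    have hlow : ∀ i, h (.x i) ≤ 3 → ∀ jz : Zc k, h (.z i jz) = h (.x i) := by
      intro i ha jz
      refine (hR i).1 ?_ jz
      simp only [Set.mem_insert_iff, Set.mem_singleton_iff]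
      have := hxb i; omega
    have hz13 : ∀ i (jz : Zc k), 1 ≤ h (.z i jz) ∧ h (.z i jz) ≤ 3 := by
      intro i jz
      rcases Nat.lt_or_ge (h (.x i)) 4 with hlt | hge
      · have := hlow i (by omega) jz; have := hxb i; omega
      · have := ((hR i).2 (Finset.mem_Icc.2 ⟨hge, (hxb i).2⟩)).1 jz
        simp only [Set.mem_insert_iff, Set.mem_singleton_iff] at this
        omega
    have heqq : ∀ i (jz jz' : Zc k), (jz.1 < h (.x i) ↔ jz'.1 < h (.x i)) →
        h (.z i jz) = h (.z i jz') := by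
      intro i jz jz' hiff
      rcases Nat.lt_or_ge (h (.x i)) 4 with hlt | hge
      · rw [hlow i (by omega) jz, hlow i (by omega) jz']
      · have hmem := Finset.mem_Icc.2 ⟨hge, (hxb i).2⟩
        rcases Nat.lt_or_ge jz.1 (h (.x i)) with hl | hg
        · exact ((hR i).2 hmem).2.1 jz jz' hl (hiff.1 hl)
        · exact ((hR i).2 hmem).2.2.1 jz jz' hg (by
            rcases Nat.lt_or_ge jz'.1 (h (.x i)) with hl' | hg'
            · exact absurd (hiff.2 hl') (by omega)
            · exact hg')
    have hnee : ∀ i (jz jz' : Zc k), jz.1 < h (.x i) → h (.x i) ≤ jz'.1 →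
        h (.z i jz) ≠ h (.z i jz') := by
      intro i jz jz' hl hg
      rcases Nat.lt_or_ge (h (.x i)) 4 with hlt | hge
      · have := jz.2; omega
      · exact ((hR i).2 (Finset.mem_Icc.2 ⟨hge, (hxb i).2⟩)).2.2.2 jz jz' hl hg
    refine ⟨col m k h, ⟨col_bounds m k h hk hxb hyb hzb, ?_⟩,
      fun i => rfl, fun t => rfl, fun i jz => rfl⟩
    intro x y hadj
    rw [G1, SimpleGraph.fromRel_adj] at hadj
    obtain ⟨hne, hor⟩ := hadj
    rcases hor with hr | hr
    · exact col_ne m k h hk hrainbow hxb hz13 heqq hnee hlow x y hr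
    · exact (col_ne m k h hk hrainbow hxb hz13 heqq hnee hlow y x hr).symm
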